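/- arXiv:2604.20818 — 3 statements merged into one kernel-verified Lean document; each statement's English description precedes it below -/
import Mathlib

section
/- Let f(z) = [[a₁, b₁ + b₂ z], [b₁ + b₂/z, a₁]] with b₁, b₂ ∈ ℂ nonzero. The polynomial det(f(z) - λ Id), viewed as a quadratic in λ, has a double root for some z on the unit circle if and only if b₂ = -b₁ e^{iα} for some α ∈ ℝ, i.e., if and only if |b₁| = |b₂|. -/
/-- Band-gap closing for the dimer symbol: `det(f(z) - λ)` has a double root in `λ` for some
`z` on the unit circle iff `b₂ = -b₁ e^{iα}` for some real `α`, iff `|b₁| = |b₂|`. -/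
theorem stmt6 (a₁ b₁ b₂ : ℂ) (hb₁ : b₁ ≠ 0) (hb₂ : b₂ ≠ 0) :
    ((∃ z : ℂ, ‖z‖ = 1 ∧ ∃ μ : ℂ,
        ∀ lam : ℂ, (a₁ - lam) ^ 2 - (b₁ + b₂ * z) * (b₁ + b₂ / z) = (lam - μ) ^ 2)
      ↔ ∃ α : ℝ, b₂ = -b₁ * Complex.exp (α * Complex.I)) ∧
    ((∃ α : ℝ, b₂ = -b₁ * Complex.exp (α * Complex.I)) ↔
      ‖b₁‖ = ‖b₂‖) := by
  have h2 : (∃ α : ℝ, b₂ = -b₁ * Complex.exp (α * Complex.I)) ↔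
      ‖b₁‖ = ‖b₂‖ := by
    constructor
    · rintro ⟨α, rfl⟩
      simp [Complex.norm_exp]
    · intro h
      refine ⟨(b₂ / (-b₁)).arg, ?_⟩
      have habs : ‖b₂ / (-b₁)‖ = 1 := by
        rw [norm_div, norm_neg, ← h, div_self]
        simpa using hb₁
      have key := Complex.norm_mul_exp_arg_mul_I (b₂ / (-b₁))
      rw [habs, Complex.ofReal_one, one_mul] at key
      have hnb : (-b₁ : ℂ) ≠ 0 := neg_ne_zero.mpr hb₁
      field_simp at key
      rw [div_neg]
      linear_combination key
  refine ⟨?_, h2⟩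
  constructor
  · rintro ⟨z, hz, μ, hμ⟩
    have hz0 : z ≠ 0 := by
      intro h; rw [h] at hz; simp at hz
    have hC0 : (b₁ + b₂ * z) * (b₁ + b₂ / z) = 0 := by
      linear_combination (- (hμ a₁) - hμ μ) / 2
    apply h2.mpr
    rcases mul_eq_zero.mp hC0 with h | h
    · have hbz : b₂ * z = -b₁ := by linear_combination h
      have := congrArg norm hbz
      rw [norm_mul, hz, norm_neg, mul_one] at this
      exact this.symm
    · have hbz : b₂ / z = -b₁ := by linear_combination h
      have := congrArg norm hbz
      rw [norm_div, hz, norm_neg, div_one] at this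
      exact this.symm
  · rintro ⟨α, hα⟩
    have h := h2.mp ⟨α, hα⟩
    refine ⟨-b₁ / b₂, ?_, a₁, ?_⟩
    · rw [norm_div, norm_neg, h, div_self]
      simpa using hb₂
    · intro lam
      have hfac : b₁ + b₂ * (-b₁ / b₂) = 0 := by field_simp; ring
      rw [hfac, zero_mul]; ring
end

section
/- Let T_A be the semi-infinite operator on ℓ²(ℕ) and T_{AB} the two-sided interface operator on ℓ²(ℤ) defined by: T_{AB} restricted to positive indices acts as T_A, restricted to negative indices acts as the reflection R T_A R, with interface row (T_{AB}w)₀ = q w₋₁ + η w₀ + q w₁ and coupling rows (T_{AB}w)₁ = q w₀ + (T_A w₊)₁, (T_{AB}w)₋₁ = q w₀ + (R T_A R w₋)₋₁. If T_A v = λ v with v ∈ ℓ²(ℕ), then the vector w defined by wᵢ = vᵢ for i > 0, w₀ = 0, wᵢ = -v_{|i|} for i < 0, satisfies T_{AB} w = λ w. In particular σ_p(T_A) ⊆ σ_p(T_{AB}). -/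
/-- Edge-induced interface modes: if `T_A v = λ v` with `v ∈ ℓ²(ℕ)`, then the antisymmetric
(dipole) extension `w` (with `w₀ = 0`) is an eigenvector of the reflection-symmetric interface
operator `T_{AB}` with the same eigenvalue, independently of the couplings `q, η`. -/
theorem stmt14 (delta beta : ℕ → ℂ) (q eta lam : ℂ)
    (v : ℕ → ℂ) (hv2 : Memℓp v 2)
    (hrow0 : delta 0 * v 0 + beta 0 * v 1 = lam * v 0)
    (hrows : ∀ n : ℕ,
      beta n * v n + delta (n + 1) * v (n + 1) + beta (n + 1) * v (n + 2) = lam * v (n + 1))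
    (w : ℤ → ℂ)
    (hw : ∀ i : ℤ, w i =
      if 0 < i then v (i - 1).toNat else if i = 0 then 0 else -v (-i - 1).toNat) :
    Memℓp w 2 ∧
    (q * w (-1) + eta * w 0 + q * w 1 = lam * w 0) ∧
    (q * w 0 + delta 0 * w 1 + beta 0 * w 2 = lam * w 1) ∧
    (∀ n : ℕ, beta n * w ((n : ℤ) + 1) + delta (n + 1) * w ((n : ℤ) + 2) +
      beta (n + 1) * w ((n : ℤ) + 3) = lam * w ((n : ℤ) + 2)) ∧
    (q * w 0 + delta 0 * w (-1) + beta 0 * w (-2) = lam * w (-1)) ∧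
    (∀ n : ℕ, beta n * w (-(n : ℤ) - 1) + delta (n + 1) * w (-(n : ℤ) - 2) +
      beta (n + 1) * w (-(n : ℤ) - 3) = lam * w (-(n : ℤ) - 2)) := by
  have hpos : ∀ (i : ℤ) (n : ℕ), i = (n : ℤ) + 1 → w i = v n := by
    intro i n hi
    rw [hw, if_pos (by omega)]
    congr 1
    omega
  have hneg : ∀ (i : ℤ) (n : ℕ), i = -(n : ℤ) - 1 → w i = -v n := by
    intro i n hi
    rw [hw, if_neg (by omega), if_neg (by omega)]
    congr 2
    omega
  have h0 : w 0 = 0 := by rw [hw]; norm_num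
  have w1 : w 1 = v 0 := hpos 1 0 (by norm_num)
  have w2 : w 2 = v 1 := hpos 2 1 (by norm_num)
  have wm1 : w (-1) = -v 0 := hneg (-1) 0 (by norm_num)
  have wm2 : w (-2) = -v 1 := hneg (-2) 1 (by norm_num)
  refine ⟨?_, ?_, ?_, ?_, ?_, ?_⟩
  · apply memℓp_gen
    have hs : Summable fun n : ℕ => ‖v n‖ ^ (ENNReal.toReal 2) := hv2.summable (by norm_num)
    apply Summable.of_nat_of_neg_add_one
    · refine (summable_nat_add_iff 1).1 ?_
      have : (fun n : ℕ => ‖w ((n + 1 : ℕ) : ℤ)‖ ^ (ENNReal.toReal 2))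
          = fun n : ℕ => ‖v n‖ ^ (ENNReal.toReal 2) := by
        funext n
        rw [hpos _ n (by push_cast; ring)]
      exact this ▸ hs
    · have : (fun n : ℕ => ‖w (-((n : ℤ) + 1))‖ ^ (ENNReal.toReal 2))
          = fun n : ℕ => ‖v n‖ ^ (ENNReal.toReal 2) := by
        funext n
        rw [hneg _ n (by ring), norm_neg]
      exact this ▸ hs
  · rw [h0, w1, wm1]; ring
  · rw [h0, w1, w2]
    linear_combination hrow0
  · intro n
    rw [hpos _ n rfl, hpos _ (n + 1) (by push_cast; ring), hpos _ (n + 2) (by push_cast; ring)]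
    exact hrows n
  · rw [h0, wm1, wm2]
    linear_combination -hrow0
  · intro n
    rw [hneg _ n rfl, hneg _ (n + 1) (by push_cast; ring), hneg _ (n + 2) (by push_cast; ring)]
    linear_combination -hrows n
end

section
/- Let T_A be a bounded tridiagonal operator on ℓ²(ℕ) and define the interface operator T_{AB} on ℓ²(ℤ) by joining T_A and its mirror R T_A R through a single off-diagonal coupling q (no shared interface site): (T_{AB}w)ᵢ = (T_A w₊)ᵢ for i ≥ 2, (T_{AB}w)₁ = q w₀ + (T_A w₊)₁, and symmetrically for negative indices. Suppose u ∈ ℓ²(ℕ) satisfies the bulk equations (T_A u)ᵢ = λ uᵢ for i ≥ 2 and the first row satisfies ((T_A)₁₁ - λ)u₁ + (T_A)₁₂ u₂ = -aq u₁ for some a ∈ {+1, -1}. Then w defined by wᵢ = u_i for i ≥ 1 and wᵢ = a·u_{|i|} for i ≤ 0 (with appropriate index shift) satisfies T_{AB}w = λ w. -/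
/-- Coupled-interface construction: if `u` solves the bulk equations of `T_A` and its first row
satisfies `((T_A)₁₁ - λ)u₁ + (T_A)₁₂ u₂ = -a q u₁` with `a = ±1`, then the extension `w` of `u`
by `a·u` across the coupling `q` is an eigenvector of the interface operator at `λ`. -/
theorem stmt19 (delta beta : ℕ → ℂ) (q lam aa : ℂ) (haa : aa = 1 ∨ aa = -1)
    (u : ℕ → ℂ) (hu2 : Memℓp u 2)
    (hfirst : (delta 0 - lam) * u 0 + beta 0 * u 1 = -(aa * q * u 0))
    (hbulk : ∀ n : ℕ,
      beta n * u n + delta (n + 1) * u (n + 1) + beta (n + 1) * u (n + 2) = lam * u (n + 1))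
    (w : ℤ → ℂ)
    (hw : ∀ i : ℤ, w i = if 1 ≤ i then u (i - 1).toNat else aa * u (-i).toNat) :
    Memℓp w 2 ∧
    (q * w 0 + delta 0 * w 1 + beta 0 * w 2 = lam * w 1) ∧
    (∀ n : ℕ, beta n * w ((n : ℤ) + 1) + delta (n + 1) * w ((n : ℤ) + 2) +
      beta (n + 1) * w ((n : ℤ) + 3) = lam * w ((n : ℤ) + 2)) ∧
    (q * w 1 + delta 0 * w 0 + beta 0 * w (-1) = lam * w 0) ∧
    (∀ n : ℕ, beta n * w (-(n : ℤ)) + delta (n + 1) * w (-(n : ℤ) - 1) +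
      beta (n + 1) * w (-(n : ℤ) - 2) = lam * w (-(n : ℤ) - 1)) := by
  have haa2 : aa * aa = 1 := by rcases haa with h | h <;> simp [h]
  have hnaa : ‖aa‖ = 1 := by rcases haa with h | h <;> simp [h]
  -- explicit values of w
  have hwpos : ∀ n : ℕ, w ((n : ℤ) + 1) = u n := by
    intro n
    rw [hw]
    have h1 : (1 : ℤ) ≤ (n : ℤ) + 1 := by omega
    simp [h1]
  have hwneg : ∀ n : ℕ, w (-(n : ℤ)) = aa * u n := by
    intro n
    rw [hw]
    have h1 : ¬ (1 : ℤ) ≤ -(n : ℤ) := by omega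
    simp [h1]
  have hw0 : w 0 = aa * u 0 := by simpa using hwneg 0
  have hw1 : w 1 = u 0 := by simpa using hwpos 0
  have hw2 : w 2 = u 1 := by simpa using hwpos 1
  have hwm1 : w (-1) = aa * u 1 := by simpa using hwneg 1
  refine ⟨?_, ?_, ?_, ?_, ?_⟩
  · -- Memℓp
    refine memℓp_gen ?_
    rw [summable_int_iff_summable_nat_and_neg]
    have hsum := hu2.summable (show (0:ℝ) < ENNReal.toReal 2 by norm_num)
    constructor
    · rw [← summable_nat_add_iff 1]
      simp only [Nat.cast_add, Nat.cast_one, hwpos]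
      exact hsum
    · simp only [hwneg, norm_mul, hnaa, one_mul]
      exact hsum
  · -- first row
    rw [hw0, hw1, hw2]
    linear_combination hfirst
  · -- positive bulk
    intro n
    have e1 : w ((n : ℤ) + 1) = u n := hwpos n
    have e2 : w ((n : ℤ) + 2) = u (n + 1) := by
      rw [show ((n : ℤ) + 2) = ((n + 1 : ℕ) : ℤ) + 1 by push_cast; ring, hwpos]
    have e3 : w ((n : ℤ) + 3) = u (n + 2) := by
      rw [show ((n : ℤ) + 3) = ((n + 2 : ℕ) : ℤ) + 1 by push_cast; ring, hwpos]
    rw [e1, e2, e3]; exact hbulk n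
  · -- mirrored first row
    rw [hw0, hw1, hwm1]
    linear_combination aa * hfirst - q * u 0 * haa2
  · -- mirrored bulk
    intro n
    have e1 : w (-(n : ℤ)) = aa * u n := hwneg n
    have e2 : w (-(n : ℤ) - 1) = aa * u (n + 1) := by
      rw [show (-(n : ℤ) - 1) = -((n + 1 : ℕ) : ℤ) by push_cast; ring, hwneg]
    have e3 : w (-(n : ℤ) - 2) = aa * u (n + 2) := by
      rw [show (-(n : ℤ) - 2) = -((n + 2 : ℕ) : ℤ) by push_cast; ring, hwneg]
    rw [e1, e2, e3]
    linear_combination aa * hbulk n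
end
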